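/- Stability implies generalization (in expectation, Lipschitz case): Let ℓ: ℝ^d × Z → ℝ be L-Lipschitz in its first argument. Let S = (z₁,...,z_n) and S̃ = (z'₁,...,z'_n) be two independent i.i.d. samples from distribution P, and for i ∈ [n] let S^i be S with z_i replaced by z'_i. Let A be a deterministic map from datasets to ℝ^d. Then E_{S,S̃}[L_P(A(S)) − L_S(A(S))] ≤ L · E_{S,S̃}[(1/n)Σ_{i=1}^n ‖A(S) − A(S^i)‖₂], where L_P(w) = E_{z∼P} ℓ(w,z) and L_S(w) = (1/n)Σ_i ℓ(w, z_i). -/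
import Mathlib


open MeasureTheory

private lemma aux_eval_mp {Z : Type*} [MeasurableSpace Z] (P : Measure Z) [IsProbabilityMeasure P]
    {m : ℕ} (k : Fin m) :
    MeasurePreserving (fun y : Fin m → Z => y k) (Measure.pi fun _ => P) P := by
  refine ⟨measurable_pi_apply k, ?_⟩
  refine Measure.ext fun s hs => ?_
  rw [Measure.map_apply (measurable_pi_apply k) hs]
  have hpre : (fun y : Fin m → Z => y k) ⁻¹' s
      = Set.pi Set.univ (Function.update (fun _ : Fin m => (Set.univ : Set Z)) k s) := by
    ext y
    simp only [Set.mem_preimage, Set.mem_univ_pi]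
    constructor
    · intro hy i
      rcases eq_or_ne i k with rfl | hik
      · simpa using hy
      · simp [Function.update_apply, hik]
    · intro hy
      simpa using hy k
  rw [hpre, Measure.pi_pi]
  rw [Finset.prod_eq_single_of_mem k (Finset.mem_univ k)
    (fun i _ hik => by simp [Function.update_apply, hik])]
  simp

private lemma aux_integral_eval {Z : Type*} [MeasurableSpace Z] (P : Measure Z)
    [IsProbabilityMeasure P] {m : ℕ} (k : Fin m) {ξ : Z → ℝ} (hξ : Measurable ξ) :
    ∫ y : Fin m → Z, ξ (y k) ∂(Measure.pi fun _ => P) = ∫ z, ξ z ∂P := by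
  have h := aux_eval_mp P k
  have h2 := integral_map (μ := Measure.pi fun _ : Fin m => P)
    (φ := fun y : Fin m → Z => y k) (measurable_pi_apply k).aemeasurable (f := ξ)
    (by rw [h.map_eq]; exact hξ.aestronglyMeasurable)
  rw [h.map_eq] at h2
  exact h2.symm

private lemma aux_mp_reindex {ι : Type*} [Fintype ι] {Z : Type*} [MeasurableSpace Z]
    (P : Measure Z) [IsProbabilityMeasure P] (e : ι ≃ ι) :
    MeasurePreserving (fun (x : ι → Z) (i : ι) => x (e i))
      (Measure.pi fun _ => P) (Measure.pi fun _ => P) := by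
  have hmeas : Measurable (fun (x : ι → Z) (i : ι) => x (e i)) :=
    measurable_pi_lambda _ fun i => measurable_pi_apply (e i)
  refine ⟨hmeas, (Measure.pi_eq fun s hs => ?_).symm⟩
  rw [Measure.map_apply hmeas (MeasurableSet.univ_pi hs)]
  have hpre : (fun (x : ι → Z) (i : ι) => x (e i)) ⁻¹' (Set.pi Set.univ s)
      = Set.pi Set.univ (fun j => s (e.symm j)) := by
    ext x
    simp only [Set.mem_preimage, Set.mem_univ_pi]
    constructor
    · intro hx j; have := hx (e.symm j); rwa [Equiv.apply_symm_apply] at this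
    · intro hx i; have := hx (e i); rwa [Equiv.symm_apply_apply] at this
  rw [hpre, Measure.pi_pi]
  exact Fintype.prod_equiv e.symm _ _ (fun j => rfl)

private lemma aux_B1 {Z : Type*} [MeasurableSpace Z] (P : Measure Z) [IsProbabilityMeasure P]
    (m : ℕ) {ξ : Z → ℝ} (hξ : Measurable ξ)
    (h : Integrable (fun s : Fin (m+1) → Z => ∑ i, ξ (s i)) (Measure.pi fun _ : Fin (m+1) => P)) :
    Integrable ξ P ∧
      ∫ z, ‖ξ z‖ ∂P ≤ (∫ s, ‖∑ i, ξ (s i)‖ ∂(Measure.pi fun _ : Fin (m+1) => P))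
        + m * ‖∫ z, ξ z ∂P‖ := by
  set Pm : Measure (Fin m → Z) := Measure.pi fun _ => P with hPm
  set Pn1 : Measure (Fin (m+1) → Z) := Measure.pi fun _ => P with hPn1
  set e := MeasurableEquiv.piFinSuccAbove (fun _ : Fin (m+1) => Z) 0 with he
  have mpe : MeasurePreserving (⇑e) Pn1 (P.prod Pm) :=
    measurePreserving_piFinSuccAbove (fun _ : Fin (m+1) => P) 0
  set G : Z × (Fin m → Z) → ℝ := fun p => ξ p.1 + ∑ k, ξ (p.2 k) with hG
  have hGmeas : Measurable G :=
    (hξ.comp measurable_fst).add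
      (Finset.measurable_sum Finset.univ fun k _ => hξ.comp ((measurable_pi_apply k).comp measurable_snd))
  have hcomp : ∀ s : Fin (m+1) → Z, G (e s) = ∑ i, ξ (s i) := by
    intro s
    rw [Fin.sum_univ_succAbove (fun i => ξ (s i)) 0]
    rfl
  have hGint : Integrable G (P.prod Pm) := by
    refine (mpe.integrable_comp hGmeas.aestronglyMeasurable).mp ?_
    have : (G ∘ ⇑e) = fun s => ∑ i, ξ (s i) := funext hcomp
    rw [this]; exact h
  haveI : (Filter.NeBot (ae Pm)) := ae_neBot.mpr (IsProbabilityMeasure.ne_zero Pm)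
  obtain ⟨y, hy⟩ := hGint.prod_left_ae.exists
  have hξint : Integrable ξ P := by
    have h5 := hy.sub (integrable_const (∑ k, ξ (y k)))
    have h6 : ((fun x => G (x, y)) - fun _ => ∑ k : Fin m, ξ (y k)) = ξ := by
      funext x; simp [hG]
    rwa [h6] at h5
  refine ⟨hξint, ?_⟩
  have hec : ∀ k : Fin m, Integrable (fun y : Fin m → Z => ξ (y k)) Pm := fun k =>
    ((aux_eval_mp P k).integrable_comp hξ.aestronglyMeasurable).mpr hξint
  have hsum_int : Integrable (fun y : Fin m → Z => ∑ k, ξ (y k)) Pm :=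
    integrable_finset_sum _ fun k _ => hec k
  set I : ℝ := ∫ z, ξ z ∂P with hI
  have hkey : ∀ z : Z, ξ z + m * I = ∫ y, G (z, y) ∂Pm := by
    intro z
    have h1 : ∫ _ : Fin m → Z, ξ z ∂Pm = ξ z := by simp
    have h2 : ∀ k : Fin m, (∫ y : Fin m → Z, ξ (y k) ∂Pm) = I := fun k =>
      aux_integral_eval P k hξ
    rw [show (fun y : Fin m → Z => G (z, y)) = fun y => ξ z + ∑ k, ξ (y k) from rfl] at *
    rw [integral_add (integrable_const _) hsum_int, h1,
      integral_finset_sum _ (fun k _ => hec k)]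
    simp [h2, Finset.sum_const, Finset.card_univ, nsmul_eq_mul]
  have hb1 : ∫ z, ‖ξ z‖ ∂P ≤ (∫ z, ‖ξ z + m * I‖ ∂P) + m * ‖I‖ := by
    have hmono : ∫ z, ‖ξ z‖ ∂P ≤ ∫ z, (‖ξ z + m * I‖ + m * ‖I‖) ∂P := by
      refine integral_mono hξint.norm
        (((hξint.add (integrable_const _)).norm).add (integrable_const _)) fun z => ?_
      have h3 : ‖ξ z‖ ≤ ‖ξ z + m * I‖ + ‖(m : ℝ) * I‖ := by
        have := norm_add_le (ξ z + m * I) (-(m * I))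
        simpa using this
      have h4 : ‖(m : ℝ) * I‖ = m * ‖I‖ := by
        rw [norm_mul, Real.norm_natCast]
      simpa [h4] using h3
    rw [integral_add (f := fun z => ‖ξ z + (m : ℝ) * I‖) (g := fun _ => (m : ℝ) * ‖I‖)
      ((hξint.add (integrable_const _)).norm) (integrable_const _)] at hmono
    simpa using hmono
  have hb2 : ∫ z, ‖ξ z + m * I‖ ∂P ≤ ∫ z, (∫ y, ‖G (z, y)‖ ∂Pm) ∂P := by
    refine integral_mono ((hξint.add (integrable_const _)).norm)
      hGint.integral_norm_prod_left fun z => ?_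
    rw [hkey z]
    exact norm_integral_le_integral_norm _
  have hb3 : ∫ z, (∫ y, ‖G (z, y)‖ ∂Pm) ∂P = ∫ p, ‖G p‖ ∂(P.prod Pm) :=
    integral_integral hGint.norm
  have hb4 : ∫ p, ‖G p‖ ∂(P.prod Pm) = ∫ s, ‖∑ i, ξ (s i)‖ ∂Pn1 := by
    rw [← mpe.integral_comp' (fun p => ‖G p‖)]
    refine integral_congr_ae (Filter.Eventually.of_forall fun s => ?_)
    show ‖G (e s)‖ = ‖∑ i, ξ (s i)‖
    rw [hcomp s]
  calc ∫ z, ‖ξ z‖ ∂P ≤ (∫ z, ‖ξ z + m * I‖ ∂P) + m * ‖I‖ := hb1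
    _ ≤ (∫ z, (∫ y, ‖G (z, y)‖ ∂Pm) ∂P) + m * ‖I‖ := by linarith
    _ = (∫ s, ‖∑ i, ξ (s i)‖ ∂Pn1) + m * ‖I‖ := by rw [hb3, hb4]

/-- Stability implies generalization (in expectation, Lipschitz case): for an
`L`-Lipschitz loss `ℓ`, i.i.d. samples `S, S̃ ∼ P^n`, replaced datasets `S^i`,
and a (measurable) learning map `A`, the expected generalization gap of `A(S)`
is bounded by `L` times the expected on-average argument stability. -/
theorem stability_implies_generalization {d n : ℕ} (hn : 0 < n)
    {Z : Type*} [MeasurableSpace Z]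
    (P : Measure Z) [IsProbabilityMeasure P]
    (ℓ : EuclideanSpace ℝ (Fin d) → Z → ℝ) (Lip : ℝ) (hLip0 : 0 ≤ Lip)
    (hℓmeas : Measurable fun q : EuclideanSpace ℝ (Fin d) × Z => ℓ q.1 q.2)
    (hLip : ∀ (z : Z) (w w' : EuclideanSpace ℝ (Fin d)),
      |ℓ w z - ℓ w' z| ≤ Lip * ‖w - w'‖)
    (A : (Fin n → Z) → EuclideanSpace ℝ (Fin d)) (hA : Measurable A)
    (hI₁ : Integrable
      (fun q : (Fin n → Z) × (Fin n → Z) =>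
        (∫ z, ℓ (A q.1) z ∂P) - (1 / n : ℝ) * ∑ i, ℓ (A q.1) (q.1 i))
      ((Measure.pi fun _ : Fin n => P).prod (Measure.pi fun _ : Fin n => P)))
    (hI₂ : Integrable
      (fun q : (Fin n → Z) × (Fin n → Z) =>
        (1 / n : ℝ) * ∑ i, ‖A q.1 - A (Function.update q.1 i (q.2 i))‖)
      ((Measure.pi fun _ : Fin n => P).prod (Measure.pi fun _ : Fin n => P)))
    (hI₃ : Integrable
      (fun q : (Fin n → Z) × (Fin n → Z) =>
        (1 / n : ℝ) * ∑ i, ℓ (A (Function.update q.1 i (q.2 i))) (q.1 i))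
      ((Measure.pi fun _ : Fin n => P).prod (Measure.pi fun _ : Fin n => P))) :
    ∫ q, ((∫ z, ℓ (A q.1) z ∂P) - (1 / n : ℝ) * ∑ i, ℓ (A q.1) (q.1 i))
        ∂((Measure.pi fun _ : Fin n => P).prod (Measure.pi fun _ : Fin n => P))
      ≤ Lip *
        ∫ q, ((1 / n : ℝ) * ∑ i, ‖A q.1 - A (Function.update q.1 i (q.2 i))‖)
          ∂((Measure.pi fun _ : Fin n => P).prod (Measure.pi fun _ : Fin n => P)) := by
  obtain ⟨m, rfl⟩ : ∃ m, n = m + 1 := ⟨n - 1, (Nat.succ_pred_eq_of_pos hn).symm⟩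
  clear hn
  set Pn : Measure (Fin (m+1) → Z) := Measure.pi fun _ => P with hPn
  set μ : Measure ((Fin (m+1) → Z) × (Fin (m+1) → Z)) := Pn.prod Pn with hμ
  set N : ℝ := ((m + 1 : ℕ) : ℝ) with hN
  have hN0 : (0:ℝ) < N := by rw [hN]; exact_mod_cast Nat.succ_pos m
  -- ### measurability facts
  have measUpd : ∀ i : Fin (m+1), Measurable
      (fun q : (Fin (m+1) → Z) × (Fin (m+1) → Z) => Function.update q.1 i (q.2 i)) := fun i =>
    measurable_update'.comp (measurable_fst.prodMk ((measurable_pi_apply i).comp measurable_snd))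
  have measAfst : Measurable fun q : (Fin (m+1) → Z) × (Fin (m+1) → Z) => A q.1 :=
    hA.comp measurable_fst
  have measTerm : ∀ i : Fin (m+1), Measurable
      (fun q : (Fin (m+1) → Z) × (Fin (m+1) → Z) =>
        ℓ (A (Function.update q.1 i (q.2 i))) (q.1 i)) := fun i =>
    hℓmeas.comp ((hA.comp (measUpd i)).prodMk ((measurable_pi_apply i).comp measurable_fst))
  have measGi : ∀ i : Fin (m+1), Measurable
      (fun q : (Fin (m+1) → Z) × (Fin (m+1) → Z) => ℓ (A q.1) (q.1 i)) := fun i =>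
    hℓmeas.comp (measAfst.prodMk ((measurable_pi_apply i).comp measurable_fst))
  have measPhi : ∀ i : Fin (m+1), Measurable
      (fun q : (Fin (m+1) → Z) × (Fin (m+1) → Z) => ℓ (A q.1) (q.2 i)) := fun i =>
    hℓmeas.comp (measAfst.prodMk ((measurable_pi_apply i).comp measurable_snd))
  have measR' : ∀ i : Fin (m+1), Measurable
      (fun q : (Fin (m+1) → Z) × (Fin (m+1) → Z) =>
        ‖A q.1 - A (Function.update q.1 i (q.2 i))‖) := fun i =>
    (measAfst.sub (hA.comp (measUpd i))).norm
  have measR : Measurable (fun q : (Fin (m+1) → Z) × (Fin (m+1) → Z) => ‖A q.1 - A q.2‖) :=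
    (measAfst.sub (hA.comp measurable_snd)).norm
  have smFhat : StronglyMeasurable (fun t : Fin (m+1) → Z => ∫ z, ℓ (A t) z ∂P) :=
    ((hℓmeas.comp ((hA.comp measurable_fst).prodMk measurable_snd)).stronglyMeasurable).integral_prod_right'
  have measξ : ∀ t : Fin (m+1) → Z, Measurable (fun z => ℓ (A t) z) := fun t =>
    hℓmeas.comp (measurable_const.prodMk measurable_id)
  -- ### basic integrability
  have intSumR' : Integrable (fun q : (Fin (m+1) → Z) × (Fin (m+1) → Z) =>
      ∑ i, ‖A q.1 - A (Function.update q.1 i (q.2 i))‖) μ := by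
    have h := hI₂.const_mul N
    have heq : (fun q : (Fin (m+1) → Z) × (Fin (m+1) → Z) =>
        N * ((1/N) * ∑ i, ‖A q.1 - A (Function.update q.1 i (q.2 i))‖))
        = fun q => ∑ i, ‖A q.1 - A (Function.update q.1 i (q.2 i))‖ := by
      funext q; field_simp
    rwa [heq] at h
  have intR' : ∀ i : Fin (m+1), Integrable (fun q : (Fin (m+1) → Z) × (Fin (m+1) → Z) =>
      ‖A q.1 - A (Function.update q.1 i (q.2 i))‖) μ := fun i => by
    refine intSumR'.mono' ((measR' i).aestronglyMeasurable) (Filter.Eventually.of_forall fun q => ?_)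
    rw [norm_norm]
    exact Finset.single_le_sum
      (f := fun j => ‖A q.1 - A (Function.update q.1 j (q.2 j))‖)
      (fun j _ => norm_nonneg _) (Finset.mem_univ i)
  have hLipBound : ∀ (i : Fin (m+1)) (q : (Fin (m+1) → Z) × (Fin (m+1) → Z)),
      |ℓ (A (Function.update q.1 i (q.2 i))) (q.1 i) - ℓ (A q.1) (q.1 i)|
        ≤ Lip * ‖A q.1 - A (Function.update q.1 i (q.2 i))‖ := by
    intro i q
    calc |ℓ (A (Function.update q.1 i (q.2 i))) (q.1 i) - ℓ (A q.1) (q.1 i)|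
        ≤ Lip * ‖A (Function.update q.1 i (q.2 i)) - A q.1‖ := hLip _ _ _
      _ = Lip * ‖A q.1 - A (Function.update q.1 i (q.2 i))‖ := by rw [norm_sub_rev]
  have intU : ∀ i : Fin (m+1), Integrable (fun q : (Fin (m+1) → Z) × (Fin (m+1) → Z) =>
      ℓ (A (Function.update q.1 i (q.2 i))) (q.1 i) - ℓ (A q.1) (q.1 i)) μ := fun i => by
    refine ((intR' i).const_mul Lip).mono'
      (((measTerm i).sub (measGi i)).aestronglyMeasurable)
      (Filter.Eventually.of_forall fun q => ?_)
    rw [Real.norm_eq_abs]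
    exact hLipBound i q
  have intG : Integrable (fun q : (Fin (m+1) → Z) × (Fin (m+1) → Z) =>
      (1/N) * ∑ i, ℓ (A q.1) (q.1 i)) μ := by
    have h := hI₃.sub ((integrable_finset_sum Finset.univ (fun i _ => intU i)).const_mul (1/N))
    refine h.congr (Filter.Eventually.of_forall fun q => ?_)
    show (1/N) * (∑ i, ℓ (A (Function.update q.1 i (q.2 i))) (q.1 i))
          - (1/N) * ∑ i, (ℓ (A (Function.update q.1 i (q.2 i))) (q.1 i) - ℓ (A q.1) (q.1 i))
        = (1/N) * ∑ i, ℓ (A q.1) (q.1 i)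
    rw [Finset.sum_sub_distrib]; ring
  have intF : Integrable (fun q : (Fin (m+1) → Z) × (Fin (m+1) → Z) =>
      ∫ z, ℓ (A q.1) z ∂P) μ := by
    have h := hI₁.add intG
    refine h.congr (Filter.Eventually.of_forall fun q => ?_)
    show ((∫ z, ℓ (A q.1) z ∂P) - (1/N) * ∑ i, ℓ (A q.1) (q.1 i))
          + (1/N) * ∑ i, ℓ (A q.1) (q.1 i) = ∫ z, ℓ (A q.1) z ∂P
    ring
  -- ### reindexing machinery
  have mpE : MeasurePreserving
      (⇑(MeasurableEquiv.sumPiEquivProdPi (fun _ : Fin (m+1) ⊕ Fin (m+1) => Z)))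
      (Measure.pi fun _ : Fin (m+1) ⊕ Fin (m+1) => P) μ :=
    measurePreserving_sumPiEquivProdPi fun _ => P
  have mpEs : MeasurePreserving
      (⇑(MeasurableEquiv.sumPiEquivProdPi (fun _ : Fin (m+1) ⊕ Fin (m+1) => Z)).symm)
      μ (Measure.pi fun _ : Fin (m+1) ⊕ Fin (m+1) => P) :=
    MeasurePreserving.symm _ mpE
  have mpT : ∀ e : (Fin (m+1) ⊕ Fin (m+1)) ≃ (Fin (m+1) ⊕ Fin (m+1)),
      MeasurePreserving (fun q : (Fin (m+1) → Z) × (Fin (m+1) → Z) =>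
        ((fun k => Sum.elim q.1 q.2 (e (Sum.inl k)),
          fun k => Sum.elim q.1 q.2 (e (Sum.inr k))) :
            (Fin (m+1) → Z) × (Fin (m+1) → Z))) μ μ := by
    intro e
    have h1 := mpE.comp ((aux_mp_reindex P e).comp mpEs)
    have hfun : (⇑(MeasurableEquiv.sumPiEquivProdPi (fun _ : Fin (m+1) ⊕ Fin (m+1) => Z))
        ∘ (fun (x : Fin (m+1) ⊕ Fin (m+1) → Z) (i : Fin (m+1) ⊕ Fin (m+1)) => x (e i))
        ∘ ⇑(MeasurableEquiv.sumPiEquivProdPi (fun _ : Fin (m+1) ⊕ Fin (m+1) => Z)).symm)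
        = fun q : (Fin (m+1) → Z) × (Fin (m+1) → Z) =>
          ((fun k => Sum.elim q.1 q.2 (e (Sum.inl k)),
            fun k => Sum.elim q.1 q.2 (e (Sum.inr k))) :
              (Fin (m+1) → Z) × (Fin (m+1) → Z)) := by
      funext q
      have hq : ∀ j : Fin (m+1) ⊕ Fin (m+1),
          ((MeasurableEquiv.sumPiEquivProdPi (fun _ : Fin (m+1) ⊕ Fin (m+1) => Z)).symm q) j
            = Sum.elim q.1 q.2 j := by rintro (j | j) <;> rfl
      refine Prod.ext ?_ ?_
      · funext k; exact hq (e (Sum.inl k))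
      · funext k; exact hq (e (Sum.inr k))
    rwa [hfun] at h1
  -- the swap-coordinate-i involution
  have mpSwap : ∀ i : Fin (m+1), MeasurePreserving
      (fun q : (Fin (m+1) → Z) × (Fin (m+1) → Z) =>
        ((Function.update q.1 i (q.2 i), Function.update q.2 i (q.1 i)) :
          (Fin (m+1) → Z) × (Fin (m+1) → Z))) μ μ := by
    intro i
    set f : Fin (m+1) ⊕ Fin (m+1) → Fin (m+1) ⊕ Fin (m+1) :=
      Sum.elim (fun k => if k = i then Sum.inr k else Sum.inl k)
        (fun k => if k = i then Sum.inl k else Sum.inr k) with hf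
    have hinv : Function.Involutive f := by
      rintro (k | k) <;> by_cases hk : k = i <;> simp [hf, hk]
    have h1 := mpT (Equiv.mk f f hinv.leftInverse hinv.rightInverse)
    have hfun : (fun q : (Fin (m+1) → Z) × (Fin (m+1) → Z) =>
        ((fun k => Sum.elim q.1 q.2 ((Equiv.mk f f hinv.leftInverse hinv.rightInverse) (Sum.inl k)),
          fun k => Sum.elim q.1 q.2 ((Equiv.mk f f hinv.leftInverse hinv.rightInverse) (Sum.inr k))) :
            (Fin (m+1) → Z) × (Fin (m+1) → Z)))
        = fun q => (Function.update q.1 i (q.2 i), Function.update q.2 i (q.1 i)) := by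
      funext q
      refine Prod.ext ?_ ?_ <;> funext k <;>
        simp only [Equiv.coe_fn_mk, hf, Sum.elim_inl, Sum.elim_inr, Function.update_apply] <;>
        by_cases hk : k = i
      · subst hk; simp
      · simp [hk]
      · subst hk; simp
      · simp [hk]
    rwa [hfun] at h1
  -- the swap-below-j involution (for the telescoping chain)
  have mpChain : ∀ j : Fin (m+1), MeasurePreserving
      (fun q : (Fin (m+1) → Z) × (Fin (m+1) → Z) =>
        (((fun k => if (k : ℕ) < (j : ℕ) then q.2 k else q.1 k),
          (fun k => if (k : ℕ) < (j : ℕ) then q.1 k else q.2 k)) :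
            (Fin (m+1) → Z) × (Fin (m+1) → Z))) μ μ := by
    intro j
    set f : Fin (m+1) ⊕ Fin (m+1) → Fin (m+1) ⊕ Fin (m+1) :=
      Sum.elim (fun k => if (k : ℕ) < (j : ℕ) then Sum.inr k else Sum.inl k)
        (fun k => if (k : ℕ) < (j : ℕ) then Sum.inl k else Sum.inr k) with hf
    have hinv : Function.Involutive f := by
      rintro (k | k) <;> by_cases hk : (k : ℕ) < (j : ℕ)
      · simp only [hf, Sum.elim_inl, Sum.elim_inr, if_pos hk]
      · simp only [hf, Sum.elim_inl, if_neg hk]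
      · simp only [hf, Sum.elim_inr, Sum.elim_inl, if_pos hk]
      · simp only [hf, Sum.elim_inr, if_neg hk]
    have h1 := mpT (Equiv.mk f f hinv.leftInverse hinv.rightInverse)
    have hfun : (fun q : (Fin (m+1) → Z) × (Fin (m+1) → Z) =>
        ((fun k => Sum.elim q.1 q.2 ((Equiv.mk f f hinv.leftInverse hinv.rightInverse) (Sum.inl k)),
          fun k => Sum.elim q.1 q.2 ((Equiv.mk f f hinv.leftInverse hinv.rightInverse) (Sum.inr k))) :
            (Fin (m+1) → Z) × (Fin (m+1) → Z)))
        = fun q : (Fin (m+1) → Z) × (Fin (m+1) → Z) =>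
          (((fun k => if (k : ℕ) < (j : ℕ) then q.2 k else q.1 k),
            (fun k => if (k : ℕ) < (j : ℕ) then q.1 k else q.2 k)) :
              (Fin (m+1) → Z) × (Fin (m+1) → Z)) := by
      funext q
      refine Prod.ext ?_ ?_ <;> funext k <;>
        simp only [Equiv.coe_fn_mk, hf, Sum.elim_inl, Sum.elim_inr] <;>
        by_cases hk : (k : ℕ) < (j : ℕ)
      · simp only [if_pos hk, Sum.elim_inr]
      · simp only [if_neg hk, Sum.elim_inl]
      · simp only [if_pos hk, Sum.elim_inl]
      · simp only [if_neg hk, Sum.elim_inr]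
    rwa [hfun] at h1
  -- ### integrability of the full-resample stability via telescoping
  have intStep : ∀ j : Fin (m+1), Integrable
      (fun q : (Fin (m+1) → Z) × (Fin (m+1) → Z) =>
        ‖A (fun k => if (k : ℕ) < (j : ℕ) then q.2 k else q.1 k)
          - A (Function.update (fun k => if (k : ℕ) < (j : ℕ) then q.2 k else q.1 k) j (q.2 j))‖) μ := by
    intro j
    have h := ((mpChain j).integrable_comp (measR' j).aestronglyMeasurable).mpr (intR' j)
    refine h.congr (Filter.Eventually.of_forall fun q => ?_)
    show ‖A (fun k => if (k : ℕ) < (j : ℕ) then q.2 k else q.1 k)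
        - A (Function.update (fun k => if (k : ℕ) < (j : ℕ) then q.2 k else q.1 k) j
            (if (j : ℕ) < (j : ℕ) then q.1 j else q.2 j))‖
      = ‖A (fun k => if (k : ℕ) < (j : ℕ) then q.2 k else q.1 k)
        - A (Function.update (fun k => if (k : ℕ) < (j : ℕ) then q.2 k else q.1 k) j (q.2 j))‖
    rw [if_neg (lt_irrefl _)]
  have intR : Integrable (fun q : (Fin (m+1) → Z) × (Fin (m+1) → Z) => ‖A q.1 - A q.2‖) μ := by
    refine (integrable_finset_sum Finset.univ (fun j _ => intStep j)).mono'
      measR.aestronglyMeasurable (Filter.Eventually.of_forall fun q => ?_)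
    rw [norm_norm]
    set c : ℕ → (Fin (m+1) → Z) := fun j k => if (k : ℕ) < j then q.2 k else q.1 k with hc
    have h0 : c 0 = q.1 := by funext k; simp [hc]
    have h1 : c (m+1) = q.2 := by funext k; simp [hc, k.isLt]
    have tele := dist_le_range_sum_dist (fun j => A (c j)) (m+1)
    rw [h0, h1, dist_eq_norm] at tele
    refine le_trans tele (le_of_eq ?_)
    rw [← Fin.sum_univ_eq_sum_range (fun j => dist (A (c j)) (A (c (j+1))))]
    refine Finset.sum_congr rfl fun j _ => ?_
    have hcj : c ((j : ℕ) + 1) = Function.update (c (j : ℕ)) j (q.2 j) := by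
      funext k
      rw [Function.update_apply, hc]
      by_cases hk : k = j
      · subst hk; simp
      · have : ((k : ℕ) < (j : ℕ) + 1) ↔ ((k : ℕ) < (j : ℕ)) := by
          have : (k : ℕ) ≠ (j : ℕ) := fun hkk => hk (Fin.ext hkk)
          omega
        simp only [if_neg hk, this]
    rw [dist_eq_norm, hcj]
  -- ### integrability of the ghost empirical sum
  have intGsum : Integrable (fun q : (Fin (m+1) → Z) × (Fin (m+1) → Z) =>
      ∑ i, ℓ (A q.1) (q.1 i)) μ := by
    have h := intG.const_mul N
    refine h.congr (Filter.Eventually.of_forall fun q => ?_)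
    show N * ((1/N) * ∑ i, ℓ (A q.1) (q.1 i)) = ∑ i, ℓ (A q.1) (q.1 i)
    field_simp
  have intKs : Integrable (fun q : (Fin (m+1) → Z) × (Fin (m+1) → Z) =>
      ∑ i, ℓ (A q.2) (q.1 i)) μ := by
    have hd : Integrable (fun q : (Fin (m+1) → Z) × (Fin (m+1) → Z) =>
        ∑ i, (ℓ (A q.1) (q.1 i) - ℓ (A q.2) (q.1 i))) μ := by
      refine (intR.const_mul (N * Lip)).mono'
        ((Finset.measurable_sum Finset.univ fun i _ => (measGi i).sub
          (hℓmeas.comp ((hA.comp measurable_snd).prodMk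
            ((measurable_pi_apply i).comp measurable_fst)))).aestronglyMeasurable)
        (Filter.Eventually.of_forall fun q => ?_)
      calc ‖∑ i, (ℓ (A q.1) (q.1 i) - ℓ (A q.2) (q.1 i))‖
          ≤ ∑ i, ‖ℓ (A q.1) (q.1 i) - ℓ (A q.2) (q.1 i)‖ := norm_sum_le _ _
        _ ≤ ∑ _i : Fin (m+1), Lip * ‖A q.1 - A q.2‖ := by
            refine Finset.sum_le_sum fun i _ => ?_
            rw [Real.norm_eq_abs]
            exact hLip _ _ _
        _ = N * Lip * ‖A q.1 - A q.2‖ := by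
            rw [Finset.sum_const, Finset.card_univ, Fintype.card_fin, nsmul_eq_mul, hN]
            push_cast; ring
    have h := intGsum.sub hd
    refine h.congr (Filter.Eventually.of_forall fun q => ?_)
    show (∑ i, ℓ (A q.1) (q.1 i)) - ∑ i, (ℓ (A q.1) (q.1 i) - ℓ (A q.2) (q.1 i))
        = ∑ i, ℓ (A q.2) (q.1 i)
    rw [Finset.sum_sub_distrib]; ring
  have intKsw : Integrable (fun q : (Fin (m+1) → Z) × (Fin (m+1) → Z) =>
      ∑ i, ℓ (A q.1) (q.2 i)) μ := by
    have hswap : MeasurePreserving (Prod.swap :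
        (Fin (m+1) → Z) × (Fin (m+1) → Z) → (Fin (m+1) → Z) × (Fin (m+1) → Z)) μ μ :=
      Measure.measurePreserving_swap
    have hm : AEStronglyMeasurable (fun q : (Fin (m+1) → Z) × (Fin (m+1) → Z) =>
        ∑ i, ℓ (A q.2) (q.1 i)) μ :=
      (Finset.measurable_sum Finset.univ fun i _ => hℓmeas.comp ((hA.comp measurable_snd).prodMk
        ((measurable_pi_apply i).comp measurable_fst))).aestronglyMeasurable
    exact (hswap.integrable_comp hm).mpr intKs
  -- ### key integrability of the decoupled single term (uses aux_B1)
  have mpFst : MeasurePreserving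
      (Prod.fst : (Fin (m+1) → Z) × (Fin (m+1) → Z) → (Fin (m+1) → Z)) μ Pn :=
    ⟨measurable_fst, by rw [hμ, Measure.map_fst_prod, measure_univ, one_smul]⟩
  have hFhat_int : Integrable (fun t : Fin (m+1) → Z => ∫ z, ℓ (A t) z ∂P) Pn :=
    (mpFst.integrable_comp smFhat.aestronglyMeasurable).mp intF
  have hae : ∀ᵐ t ∂Pn, Integrable (fun s : Fin (m+1) → Z => ∑ j, ℓ (A t) (s j)) Pn := by
    have h := intKsw.prod_right_ae
    exact h
  have hγ_int : Integrable (fun t : Fin (m+1) → Z => ∫ s, ‖∑ j, ℓ (A t) (s j)‖ ∂Pn) Pn :=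
    intKsw.integral_norm_prod_left
  have intPhi : ∀ i : Fin (m+1), Integrable
      (fun q : (Fin (m+1) → Z) × (Fin (m+1) → Z) => ℓ (A q.1) (q.2 i)) μ := by
    intro i
    rw [hμ]
    have hsm : AEStronglyMeasurable
        (fun q : (Fin (m+1) → Z) × (Fin (m+1) → Z) => ℓ (A q.1) (q.2 i)) (Pn.prod Pn) := by
      rw [← hμ]; exact (measPhi i).aestronglyMeasurable
    refine (integrable_prod_iff hsm).mpr ⟨?_, ?_⟩
    · filter_upwards [hae] with t ht
      have hB := aux_B1 P m (ξ := fun z => ℓ (A t) z) (measξ t) ht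
      exact ((aux_eval_mp P i).integrable_comp (measξ t).aestronglyMeasurable).mpr hB.1
    · refine (hγ_int.add ((hFhat_int.norm).const_mul (m : ℝ))).mono'
        (((measPhi i).norm.stronglyMeasurable.integral_prod_right').aestronglyMeasurable) ?_
      filter_upwards [hae] with t ht
      have hB := aux_B1 P m (ξ := fun z => ℓ (A t) z) (measξ t) ht
      have heval : ∫ s : Fin (m+1) → Z, ‖ℓ (A t) (s i)‖ ∂Pn = ∫ z, ‖ℓ (A t) z‖ ∂P :=
        aux_integral_eval P i ((measξ t).norm)
      rw [Real.norm_eq_abs, abs_of_nonneg (integral_nonneg fun s => norm_nonneg _), heval]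
      exact hB.2
  have intTerm : ∀ i : Fin (m+1), Integrable
      (fun q : (Fin (m+1) → Z) × (Fin (m+1) → Z) =>
        ℓ (A (Function.update q.1 i (q.2 i))) (q.1 i)) μ := by
    intro i
    have h := ((mpSwap i).integrable_comp (measPhi i).aestronglyMeasurable).mpr (intPhi i)
    refine h.congr (Filter.Eventually.of_forall fun q => ?_)
    show ℓ (A (Function.update q.1 i (q.2 i))) (Function.update q.2 i (q.1 i) i)
        = ℓ (A (Function.update q.1 i (q.2 i))) (q.1 i)
    rw [Function.update_self]
  -- ### the exchange identities
  have keyTerm : ∀ i : Fin (m+1),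
      ∫ q, ℓ (A (Function.update q.1 i (q.2 i))) (q.1 i) ∂μ
        = ∫ q, ℓ (A q.1) (q.2 i) ∂μ := by
    intro i
    have h2 := integral_map (μ := μ) ((mpSwap i).measurable.aemeasurable)
      (f := fun q : (Fin (m+1) → Z) × (Fin (m+1) → Z) => ℓ (A q.1) (q.2 i))
      (by rw [(mpSwap i).map_eq]; exact (measPhi i).aestronglyMeasurable)
    rw [(mpSwap i).map_eq] at h2
    refine Eq.trans ?_ h2.symm
    refine integral_congr_ae (Filter.Eventually.of_forall fun q => ?_)
    show ℓ (A (Function.update q.1 i (q.2 i))) (q.1 i)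
        = ℓ (A (Function.update q.1 i (q.2 i))) (Function.update q.2 i (q.1 i) i)
    rw [Function.update_self]
  have keyPhiF : ∀ i : Fin (m+1),
      ∫ q, ℓ (A q.1) (q.2 i) ∂μ = ∫ q, (∫ z, ℓ (A q.1) z ∂P) ∂μ := by
    intro i
    have hf : ∫ q, (∫ z, ℓ (A q.1) z ∂P) ∂μ = ∫ t, (∫ z, ℓ (A t) z ∂P) ∂Pn := by
      have h2 := integral_map (μ := μ) measurable_fst.aemeasurable
        (f := fun t : Fin (m+1) → Z => ∫ z, ℓ (A t) z ∂P)
        (by rw [mpFst.map_eq]; exact smFhat.aestronglyMeasurable)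
      rw [mpFst.map_eq] at h2
      exact h2.symm
    have hp : ∫ q, ℓ (A q.1) (q.2 i) ∂μ = ∫ t, (∫ s, ℓ (A t) (s i) ∂Pn) ∂Pn := by
      rw [hμ]
      have h3 := integral_integral (f := fun (x : Fin (m+1) → Z) (y : Fin (m+1) → Z) =>
        ℓ (A x) (y i)) (by rw [← hμ]; exact intPhi i)
      exact h3.symm
    rw [hp, hf]
    refine integral_congr_ae (Filter.Eventually.of_forall fun t => ?_)
    show (∫ s : Fin (m+1) → Z, ℓ (A t) (s i) ∂Pn) = ∫ z, ℓ (A t) z ∂P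
    exact aux_integral_eval P i (measξ t)
  have keyFH : ∫ q, ((1/N) * ∑ i, ℓ (A (Function.update q.1 i (q.2 i))) (q.1 i)) ∂μ
      = ∫ q, (∫ z, ℓ (A q.1) z ∂P) ∂μ := by
    rw [integral_const_mul, integral_finset_sum Finset.univ (fun i _ => intTerm i)]
    have hcong : ∀ i ∈ Finset.univ, ∫ q, ℓ (A (Function.update q.1 i (q.2 i))) (q.1 i) ∂μ
        = ∫ q, (∫ z, ℓ (A q.1) z ∂P) ∂μ := fun i _ => (keyTerm i).trans (keyPhiF i)
    rw [Finset.sum_congr rfl hcong, Finset.sum_const, Finset.card_univ, Fintype.card_fin,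
      nsmul_eq_mul]
    have hNN : ((m + 1 : ℕ) : ℝ) = N := hN.symm
    rw [hNN]
    field_simp
  -- ### conclusion
  have hpoint : ∀ q : (Fin (m+1) → Z) × (Fin (m+1) → Z),
      ((1/N) * ∑ i, ℓ (A (Function.update q.1 i (q.2 i))) (q.1 i))
          - (1/N) * ∑ i, ℓ (A q.1) (q.1 i)
        ≤ Lip * ((1/N) * ∑ i, ‖A q.1 - A (Function.update q.1 i (q.2 i))‖) := by
    intro q
    have hsum : ∑ i, (ℓ (A (Function.update q.1 i (q.2 i))) (q.1 i) - ℓ (A q.1) (q.1 i))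
        ≤ ∑ i, Lip * ‖A q.1 - A (Function.update q.1 i (q.2 i))‖ :=
      Finset.sum_le_sum fun i _ => le_trans (le_abs_self _) (hLipBound i q)
    calc ((1/N) * ∑ i, ℓ (A (Function.update q.1 i (q.2 i))) (q.1 i))
          - (1/N) * ∑ i, ℓ (A q.1) (q.1 i)
        = (1/N) * ∑ i, (ℓ (A (Function.update q.1 i (q.2 i))) (q.1 i) - ℓ (A q.1) (q.1 i)) := by
          rw [Finset.sum_sub_distrib]; ring
      _ ≤ (1/N) * ∑ i, Lip * ‖A q.1 - A (Function.update q.1 i (q.2 i))‖ := by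
          refine mul_le_mul_of_nonneg_left hsum ?_
          positivity
      _ = Lip * ((1/N) * ∑ i, ‖A q.1 - A (Function.update q.1 i (q.2 i))‖) := by
          rw [← Finset.mul_sum]; ring
  calc ∫ q, ((∫ z, ℓ (A q.1) z ∂P) - (1/N) * ∑ i, ℓ (A q.1) (q.1 i)) ∂μ
      = (∫ q, (∫ z, ℓ (A q.1) z ∂P) ∂μ) - ∫ q, ((1/N) * ∑ i, ℓ (A q.1) (q.1 i)) ∂μ :=
        integral_sub intF intG
    _ = (∫ q, ((1/N) * ∑ i, ℓ (A (Function.update q.1 i (q.2 i))) (q.1 i)) ∂μ)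
          - ∫ q, ((1/N) * ∑ i, ℓ (A q.1) (q.1 i)) ∂μ := by rw [keyFH]
    _ = ∫ q, (((1/N) * ∑ i, ℓ (A (Function.update q.1 i (q.2 i))) (q.1 i))
          - (1/N) * ∑ i, ℓ (A q.1) (q.1 i)) ∂μ := (integral_sub hI₃ intG).symm
    _ ≤ ∫ q, (Lip * ((1/N) * ∑ i, ‖A q.1 - A (Function.update q.1 i (q.2 i))‖)) ∂μ :=
        integral_mono (hI₃.sub intG) (hI₂.const_mul Lip) hpoint
    _ = Lip * ∫ q, ((1/N) * ∑ i, ‖A q.1 - A (Function.update q.1 i (q.2 i))‖) ∂μ :=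
        integral_const_mul Lip _
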